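/- Let K ⊆ L• be a knowledge base each of whose members is in normal form. Then R*_K is a ranked model of K, i.e., R*_K ⊨ α for every α ∈ K. -/

import Mathlib

attribute [local instance] Classical.propDecidable

universe u

/-- Sentences of Propositional Typicality Logic over atoms `P`. -/
inductive PTL (P : Type u) : Type u
  | atom : P → PTL P
  | neg  : PTL P → PTL P
  | conj : PTL P → PTL P → PTL P
  | top  : PTL P
  | bot  : PTL P
  | typ  : PTL P → PTL P

namespace PTL

/-- Material implication, defined from `¬` and `∧`. -/
def impl {P : Type u} (a b : PTL P) : PTL P := neg (conj a (neg b))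

/-- Disjunction, defined from `¬` and `∧`. -/
def disj {P : Type u} (a b : PTL P) : PTL P := neg (conj (neg a) (neg b))

/-- Purely propositional sentences: no occurrence of the typicality operator. -/
def IsProp {P : Type u} : PTL P → Prop
  | atom _ => True
  | neg a => IsProp a
  | conj a b => IsProp a ∧ IsProp b
  | top => True
  | bot => True
  | typ _ => False

end PTL

/-- Propositional valuations. -/
abbrev Val (P : Type u) := P → Bool

/-- Satisfaction of a PTL sentence by a valuation, relative to a ranking
function `rho : Val P → ℕ∞`. -/
def satR {P : Type u} (rho : Val P → ℕ∞) : Val P → PTL P → Prop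
  | v, PTL.atom p => v p = true
  | v, PTL.neg a => ¬ satR rho v a
  | v, PTL.conj a b => satR rho v a ∧ satR rho v b
  | _, PTL.top => True
  | _, PTL.bot => False
  | v, PTL.typ a => satR rho v a ∧ ∀ v', rho v' < rho v → ¬ satR rho v' a

/-- The convexity property of ranking functions. -/
def RkConvex {P : Type u} (rho : Val P → ℕ∞) : Prop :=
  ∀ (v : Val P) (i : ℕ), rho v = (i : ℕ∞) → ∀ j : ℕ, j < i → ∃ v', rho v' = (j : ℕ∞)

/-- A ranked interpretation: a convex ranking function on valuations. -/
structure RankedInterp (P : Type u) where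
  rk : Val P → ℕ∞
  convex : RkConvex rk

/-- `rho` is a ranked model of `a`: every possible valuation satisfies `a`. -/
def modelsR {P : Type u} (rho : Val P → ℕ∞) (a : PTL P) : Prop :=
  ∀ v, rho v < ⊤ → satR rho v a

/-- `R ⊨ a`. -/
def RankedInterp.models {P : Type u} (R : RankedInterp P) (a : PTL P) : Prop :=
  modelsR R.rk a

/-- `R` is a ranked model of the knowledge base `K`. -/
def modelsSet {P : Type u} (R : RankedInterp P) (K : Set (PTL P)) : Prop :=
  ∀ a ∈ K, R.models a

/-- Ranked entailment consequences of `K`. -/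
def Cn0 {P : Type u} (K : Set (PTL P)) : Set (PTL P) :=
  {a | ∀ R : RankedInterp P, modelsSet R K → R.models a}

/-- Conjunction of a list of sentences (empty conjunction is `⊤`). -/
def bigConj {P : Type u} : List (PTL P) → PTL P
  | [] => PTL.top
  | a :: l => PTL.conj a (bigConj l)

/-- Disjunction of a list of sentences (empty disjunction is `⊥`). -/
def bigDisj {P : Type u} : List (PTL P) → PTL P
  | [] => PTL.bot
  | a :: l => PTL.disj a (bigDisj l)

/-- `a` is in normal form: `⋀_{i≤t} •θᵢ → (φ ∨ ⋁_{i≤s} •ψᵢ)` with all the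
`θᵢ`, `φ`, `ψᵢ` purely propositional. -/
def InNormalForm {P : Type u} (a : PTL P) : Prop :=
  ∃ (ths : List (PTL P)) (phi : PTL P) (pss : List (PTL P)),
    (∀ t ∈ ths, t.IsProp) ∧ phi.IsProp ∧ (∀ s ∈ pss, s.IsProp) ∧
    a = PTL.impl (bigConj (ths.map PTL.typ)) (PTL.disj phi (bigDisj (pss.map PTL.typ)))

/-- `R^1_S`: increase by one the rank of every valuation not in `S`. -/
noncomputable def bump {P : Type u} (rho : Val P → ℕ∞) (S : Set (Val P)) : Val P → ℕ∞ :=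
  fun v => if v ∈ S then rho v else rho v + 1

/-- `R^∞_S`: make every valuation not in `S` impossible. -/
noncomputable def toInf {P : Type u} (rho : Val P → ℕ∞) (S : Set (Val P)) : Val P → ℕ∞ :=
  fun v => if v ∈ S then rho v else ⊤

/-- `⟦K⟧_rho`: the possible valuations satisfying every member of `K`. -/
def KExt {P : Type u} (K : Set (PTL P)) (rho : Val P → ℕ∞) : Set (Val P) :=
  {v | rho v < ⊤ ∧ ∀ a ∈ K, satR rho v a}

/-- The sequence `R_i` of the LM-minimal construction. -/
noncomputable def Rseq {P : Type u} (K : Set (PTL P)) : ℕ → Val P → ℕ∞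
  | 0 => fun _ => 0
  | i + 1 => bump (Rseq K i) (KExt K (Rseq K i))

/-- The sequence `S_i` of the LM-minimal construction:
`S_0 = ∅`, `S_{i+1} = ⟦K⟧_{R_i}`. -/
noncomputable def Sseq {P : Type u} (K : Set (PTL P)) : ℕ → Set (Val P)
  | 0 => ∅
  | i + 1 => KExt K (Rseq K i)

/-- The least `i ≥ 1` with `S_i = S_{i-1}`. -/
noncomputable def stopIdx {P : Type u} (K : Set (PTL P)) : ℕ :=
  sInf {i : ℕ | 1 ≤ i ∧ Sseq K i = Sseq K (i - 1)}

/-- The LM-minimal ranked interpretation `R*_K := (R_{i-1})^∞_{S_i}`. -/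
noncomputable def Rstar {P : Type u} (K : Set (PTL P)) : Val P → ℕ∞ :=
  toInf (Rseq K (stopIdx K - 1)) (Sseq K (stopIdx K))

section Aux

variable {P : Type u}

/-- Satisfaction of purely propositional sentences does not depend on the ranking. -/
lemma satR_isProp_congr {a : PTL P} (h : a.IsProp) (ρ₁ ρ₂ : Val P → ℕ∞) (v : Val P) :
    satR ρ₁ v a ↔ satR ρ₂ v a := by
  induction a with
  | atom p => simp [satR]
  | neg a ih => simp only [satR]; exact not_congr (ih h)
  | conj a b iha ihb =>
      obtain ⟨h1, h2⟩ := h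
      simp only [satR]; exact and_congr (iha h1) (ihb h2)
  | top => simp [satR]
  | bot => simp [satR]
  | typ a ih => exact absurd h (by simp [PTL.IsProp])

lemma satR_typ_congr {θ : PTL P} (h : θ.IsProp) {ρ₁ ρ₂ : Val P → ℕ∞} {v : Val P}
    (hv : ∀ u, ρ₁ u < ρ₁ v ↔ ρ₂ u < ρ₂ v) :
    satR ρ₁ v (PTL.typ θ) ↔ satR ρ₂ v (PTL.typ θ) := by
  simp only [satR]
  exact and_congr (satR_isProp_congr h _ _ _)
    (forall_congr' fun u => imp_congr (hv u) (not_congr (satR_isProp_congr h _ _ _)))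

lemma satR_impl {ρ : Val P → ℕ∞} {v : Val P} {a b : PTL P} :
    satR ρ v (PTL.impl a b) ↔ (satR ρ v a → satR ρ v b) := by
  simp only [PTL.impl, satR]; tauto

lemma satR_disj {ρ : Val P → ℕ∞} {v : Val P} {a b : PTL P} :
    satR ρ v (PTL.disj a b) ↔ (satR ρ v a ∨ satR ρ v b) := by
  simp only [PTL.disj, satR]; tauto

lemma satR_bigConj {ρ : Val P → ℕ∞} {v : Val P} :
    ∀ l : List (PTL P), satR ρ v (bigConj l) ↔ ∀ a ∈ l, satR ρ v a
  | [] => by simp [bigConj, satR]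
  | a :: l => by
      simp only [bigConj, satR, satR_bigConj l, List.mem_cons]
      constructor
      · rintro ⟨h1, h2⟩ b (rfl | hb)
        · exact h1
        · exact h2 b hb
      · intro h; exact ⟨h a (Or.inl rfl), fun b hb => h b (Or.inr hb)⟩

lemma satR_bigDisj {ρ : Val P → ℕ∞} {v : Val P} :
    ∀ l : List (PTL P), satR ρ v (bigDisj l) ↔ ∃ a ∈ l, satR ρ v a
  | [] => by simp [bigDisj, satR]
  | a :: l => by
      simp only [bigDisj, satR_disj, satR_bigDisj l, List.mem_cons]
      constructor
      · rintro (h | ⟨b, hb, h⟩)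
        · exact ⟨a, Or.inl rfl, h⟩
        · exact ⟨b, Or.inr hb, h⟩
      · rintro ⟨b, (rfl | hb), h⟩
        · exact Or.inl h
        · exact Or.inr ⟨b, hb, h⟩

/-- Satisfaction of a normal-form sentence at `v` is invariant under any change
of ranking that preserves the set of valuations strictly below `v`. -/
lemma satR_normal_congr {a : PTL P} (ha : InNormalForm a) {ρ₁ ρ₂ : Val P → ℕ∞} {v : Val P}
    (hv : ∀ u, ρ₁ u < ρ₁ v ↔ ρ₂ u < ρ₂ v) :
    satR ρ₁ v a ↔ satR ρ₂ v a := by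
  obtain ⟨ths, phi, pss, hths, hphi, hpss, rfl⟩ := ha
  rw [satR_impl, satR_impl, satR_disj, satR_disj,
      satR_bigConj, satR_bigConj, satR_bigDisj, satR_bigDisj]
  refine imp_congr ?_ (or_congr (satR_isProp_congr hphi _ _ _) ?_)
  · refine forall_congr' fun b => imp_congr_right fun hb => ?_
    obtain ⟨θ, hθ, rfl⟩ := List.mem_map.1 hb
    exact satR_typ_congr (hths θ hθ) hv
  · refine exists_congr fun b => and_congr_right fun hb => ?_
    obtain ⟨θ, hθ, rfl⟩ := List.mem_map.1 hb
    exact satR_typ_congr (hpss θ hθ) hv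

lemma Rseq_le (K : Set (PTL P)) : ∀ (i : ℕ) (v : Val P), Rseq K i v ≤ (i : ℕ∞)
  | 0, v => by simp [Rseq]
  | i + 1, v => by
      show bump (Rseq K i) (KExt K (Rseq K i)) v ≤ ((i + 1 : ℕ) : ℕ∞)
      unfold bump
      split
      · exact le_trans (Rseq_le K i v) (by exact_mod_cast Nat.le_succ i)
      · calc Rseq K i v + 1 ≤ (i : ℕ∞) + 1 := add_le_add (Rseq_le K i v) le_rfl
          _ = ((i + 1 : ℕ) : ℕ∞) := by push_cast; ring

lemma Rseq_lt_top (K : Set (PTL P)) (i : ℕ) (v : Val P) : Rseq K i v < ⊤ :=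
  lt_of_le_of_lt (Rseq_le K i v) (WithTop.coe_lt_top i)

lemma mem_KExt_iff {K : Set (PTL P)} {ρ : Val P → ℕ∞} {v : Val P} :
    v ∈ KExt K ρ ↔ ρ v < ⊤ ∧ ∀ a ∈ K, satR ρ v a := Iff.rfl

/-- The key invariant: valuations outside `S_{i+1}` have (maximal) rank `i` in `R_i`. -/
lemma Rseq_outside (K : Set (PTL P)) (hK : ∀ a ∈ K, InNormalForm a) :
    ∀ i : ℕ, ∀ v : Val P, v ∉ KExt K (Rseq K i) → Rseq K i v = (i : ℕ∞) := by
  intro i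
  induction i with
  | zero => intro v _; simp [Rseq]
  | succ i ih =>
      -- the strict-blocker relation at any `v ∈ S_{i+1}` is preserved by the bump
      have hcongr : ∀ v ∈ KExt K (Rseq K i), ∀ u,
          Rseq K i u < Rseq K i v ↔ Rseq K (i + 1) u < Rseq K (i + 1) v := by
        intro v hvS u
        have hvv : Rseq K (i + 1) v = Rseq K i v := by
          show bump (Rseq K i) (KExt K (Rseq K i)) v = _
          simp [bump, hvS]
        constructor
        · intro h
          have hu : u ∈ KExt K (Rseq K i) := by
            by_contra hu
            rw [ih u hu] at h
            exact absurd (lt_of_lt_of_le h (Rseq_le K i v)) (lt_irrefl _)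
          have huu : Rseq K (i + 1) u = Rseq K i u := by
            show bump (Rseq K i) (KExt K (Rseq K i)) u = _
            simp [bump, hu]
          rw [hvv, huu]; exact h
        · intro h
          rw [hvv] at h
          refine lt_of_le_of_lt ?_ h
          show Rseq K i u ≤ bump (Rseq K i) (KExt K (Rseq K i)) u
          unfold bump
          split
          · exact le_refl _
          · exact le_self_add
      -- monotonicity: S_{i+1} ⊆ S_{i+2}
      have mono : ∀ v ∈ KExt K (Rseq K i), v ∈ KExt K (Rseq K (i + 1)) := by
        intro v hv
        refine ⟨Rseq_lt_top K (i + 1) v, fun a ha => ?_⟩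
        exact (satR_normal_congr (hK a ha) (hcongr v hv)).1 (hv.2 a ha)
      intro v hv
      by_cases h1 : v ∈ KExt K (Rseq K i)
      · exact absurd (mono v h1) hv
      · have hb : Rseq K (i + 1) v = Rseq K i v + 1 := by
          show bump (Rseq K i) (KExt K (Rseq K i)) v = _
          simp [bump, h1]
        rw [hb, ih v h1]; push_cast; ring

end Aux

/-- `R*_K` is a ranked model of `K`. -/
theorem ptl_Rstar_is_model {P : Type u} [Fintype P] [DecidableEq P]
    (K : Set (PTL P)) (hK : ∀ a ∈ K, InNormalForm a) :
    ∀ a ∈ K, modelsR (Rstar K) a := by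
  intro a ha v hv
  unfold Rstar at hv ⊢
  cases hn : stopIdx K with
  | zero =>
      rw [hn] at hv
      have hT : toInf (Rseq K (0 - 1)) (Sseq K 0) v = ⊤ := by
        simp [toInf, Sseq]
      rw [hT] at hv
      exact absurd hv (lt_irrefl _)
  | succ k =>
      rw [hn] at hv
      simp only [Nat.succ_sub_one] at hv ⊢
      by_cases hvS : v ∈ KExt K (Rseq K k)
      · have hvv : toInf (Rseq K k) (Sseq K (k + 1)) v = Rseq K k v := by
          show (if v ∈ Sseq K (k + 1) then Rseq K k v else ⊤) = Rseq K k v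
          simp [show v ∈ Sseq K (k + 1) from hvS]
        have hcongr : ∀ u, Rseq K k u < Rseq K k v ↔
            toInf (Rseq K k) (Sseq K (k + 1)) u < toInf (Rseq K k) (Sseq K (k + 1)) v := by
          intro u
          constructor
          · intro h
            have hu : u ∈ KExt K (Rseq K k) := by
              by_contra hu
              rw [Rseq_outside K hK k u hu] at h
              exact absurd (lt_of_lt_of_le h (Rseq_le K k v)) (lt_irrefl _)
            have huu : toInf (Rseq K k) (Sseq K (k + 1)) u = Rseq K k u := by
              show (if u ∈ Sseq K (k + 1) then Rseq K k u else ⊤) = Rseq K k u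
              simp [show u ∈ Sseq K (k + 1) from hu]
            rw [hvv, huu]; exact h
          · intro h
            by_cases hu : u ∈ Sseq K (k + 1)
            · have huu : toInf (Rseq K k) (Sseq K (k + 1)) u = Rseq K k u := by
                simp [toInf, hu]
              rw [hvv, huu] at h; exact h
            · exfalso
              have huu : toInf (Rseq K k) (Sseq K (k + 1)) u = ⊤ := by
                simp [toInf, hu]
              rw [huu, hvv] at h
              exact absurd h (not_top_lt)
        exact (satR_normal_congr (hK a ha) hcongr).1 (hvS.2 a ha)
      · exfalso
        have hT : toInf (Rseq K k) (Sseq K (k + 1)) v = ⊤ := by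
          show (if v ∈ Sseq K (k + 1) then Rseq K k v else ⊤) = ⊤
          simp [show v ∉ Sseq K (k + 1) from hvS]
        rw [hT] at hv
        exact absurd hv (lt_irrefl _)
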